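/- Bound on the total k-th order Taylor contribution of the CSI ratio: if |c_l| = 1 for every l ∈ Fin L, then for every k ≥ 1, every z ∈ ℂ^L with D(z) ≠ 0, every R ≥ 0, and every increment vector w ∈ ℂ^L with |w_l| ≤ R for all l, the sum over all L^k tuples (l₁,…,l_k) ∈ (Fin L)^k of |(1/k!) · ∂^k f / ∂z_{l₁}⋯∂z_{l_k}(z) · ∏_{i=1}^{k} w_{l_i}| is at most ((|N(z)| + |D(z)|)/|D(z)|) · (L·R / |D(z)|)^k. -/

import Mathlib

open scoped BigOperators

/-- Numerator `N(z) = A + Σ_l z_l` of the CSI ratio. -/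
noncomputable def Nfun (L : ℕ) (A : ℂ) (z : Fin L → ℂ) : ℂ := A + ∑ l, z l

/-- Denominator `D(z) = B + Σ_l c_l z_l` of the CSI ratio. -/
noncomputable def Dfun (L : ℕ) (B : ℂ) (c : Fin L → ℂ) (z : Fin L → ℂ) : ℂ :=
  B + ∑ l, c l * z l

/-- The CSI ratio `f(z) = N(z)/D(z)`. -/
noncomputable def ffun (L : ℕ) (A B : ℂ) (c : Fin L → ℂ) (z : Fin L → ℂ) : ℂ :=
  Nfun L A z / Dfun L B c z

namespace CSIAux

/-- The linear map `v ↦ ∑ l, v l`. -/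
noncomputable def Sclm (L : ℕ) : (Fin L → ℂ) →L[ℂ] ℂ := ∑ l, ContinuousLinearMap.proj l

/-- The linear map `v ↦ ∑ l, c l * v l`. -/
noncomputable def Cclm (L : ℕ) (c : Fin L → ℂ) : (Fin L → ℂ) →L[ℂ] ℂ :=
  ∑ l, c l • ContinuousLinearMap.proj l

@[simp] lemma Sclm_apply (L : ℕ) (v : Fin L → ℂ) : Sclm L v = ∑ l, v l := by
  simp [Sclm]

@[simp] lemma Cclm_apply (L : ℕ) (c : Fin L → ℂ) (v : Fin L → ℂ) :
    Cclm L c v = ∑ l, c l * v l := by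
  simp [Cclm]

@[simp] lemma ite_clm_apply {E : Type*} [NormedAddCommGroup E] [NormedSpace ℂ E]
    (P : Prop) [Decidable P] (f g : E →L[ℂ] ℂ) (v : E) :
    (if P then f else g) v = if P then f v else g v := by split <;> rfl

@[simp] lemma Sclm_single (L : ℕ) (l : Fin L) : Sclm L (Pi.single l 1) = 1 := by
  simp [Pi.single_apply]

@[simp] lemma Cclm_single (L : ℕ) (c : Fin L → ℂ) (l : Fin L) :
    Cclm L c (Pi.single l 1) = c l := by
  simp [Pi.single_apply, mul_ite]

noncomputable def M1 (L k : ℕ) (c : Fin L → ℂ) :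
    ContinuousMultilinearMap ℂ (fun _ : Fin k => (Fin L → ℂ)) ℂ :=
  (ContinuousMultilinearMap.mkPiAlgebra ℂ (Fin k) ℂ).compContinuousLinearMap fun _ => Cclm L c

noncomputable def M2 (L k : ℕ) (c : Fin L → ℂ) :
    ContinuousMultilinearMap ℂ (fun _ : Fin k => (Fin L → ℂ)) ℂ :=
  ∑ j : Fin k, (ContinuousMultilinearMap.mkPiAlgebra ℂ (Fin k) ℂ).compContinuousLinearMap
      fun i => if i = j then Sclm L else Cclm L c

lemma M1_apply (L k : ℕ) (c : Fin L → ℂ) (m : Fin k → (Fin L → ℂ)) :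
    M1 L k c m = ∏ i, Cclm L c (m i) := by
  simp [M1]

lemma M2_apply (L k : ℕ) (c : Fin L → ℂ) (m : Fin k → (Fin L → ℂ)) :
    M2 L k c m = ∑ j, ∏ i, if i = j then Sclm L (m i) else Cclm L c (m i) := by
  simp [M2]

lemma M1_succ (L k : ℕ) (c : Fin L → ℂ) (m : Fin (k + 1) → (Fin L → ℂ)) :
    M1 L (k + 1) c m = Cclm L c (m 0) * M1 L k c (Fin.tail m) := by
  simp [M1_apply, Fin.prod_univ_succ, Fin.tail]

lemma M2_succ (L k : ℕ) (c : Fin L → ℂ) (m : Fin (k + 1) → (Fin L → ℂ)) :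
    M2 L (k + 1) c m =
      Sclm L (m 0) * M1 L k c (Fin.tail m) + Cclm L c (m 0) * M2 L k c (Fin.tail m) := by
  simp [M2_apply, M1_apply, Fin.sum_univ_succ, Fin.prod_univ_succ, Fin.succ_ne_zero,
    Fin.succ_inj, Fin.tail, Finset.mul_sum]
  exact Finset.sum_congr rfl fun x _ => by rw [if_neg (Ne.symm (Fin.succ_ne_zero x))]

end CSIAux

namespace CSIAux

lemma hasFDerivAt_N (L : ℕ) (A : ℂ) (y : Fin L → ℂ) :
    HasFDerivAt (Nfun L A) (Sclm L) y := by
  have h : Nfun L A = fun y => A + Sclm L y := by funext y; simp [Nfun]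
  rw [h]
  exact (Sclm L).hasFDerivAt.const_add A

lemma hasFDerivAt_D (L : ℕ) (B : ℂ) (c : Fin L → ℂ) (y : Fin L → ℂ) :
    HasFDerivAt (Dfun L B c) (Cclm L c) y := by
  have h : Dfun L B c = fun y => B + Cclm L c y := by funext y; simp [Dfun]
  rw [h]
  exact (Cclm L c).hasFDerivAt.const_add B

lemma hasFDerivAt_invpow (L : ℕ) (B : ℂ) (c : Fin L → ℂ) (m : ℕ) (y : Fin L → ℂ)
    (hy : Dfun L B c y ≠ 0) :
    HasFDerivAt (fun y => ((Dfun L B c y) ^ m)⁻¹)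
      ((-((m : ℂ) * Dfun L B c y ^ (m - 1)) / (Dfun L B c y ^ m) ^ 2) • Cclm L c) y := by
  have h := ((hasDerivAt_pow m (Dfun L B c y)).inv (pow_ne_zero m hy)).comp_hasFDerivAt y
    (hasFDerivAt_D L B c y)
  exact h

/-- Explicit formula for the `(n+1)`-st derivative of `ffun`. -/
noncomputable def Gfun (L : ℕ) (A B : ℂ) (c : Fin L → ℂ) (n : ℕ) (y : Fin L → ℂ) :
    ContinuousMultilinearMap ℂ (fun _ : Fin (n + 1) => (Fin L → ℂ)) ℂ :=
  ((-1 : ℂ) ^ (n + 1) * ((n + 1).factorial : ℂ) *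
      (Nfun L A y * ((Dfun L B c y ^ (n + 2))⁻¹))) • M1 L (n + 1) c
  + ((-1 : ℂ) ^ n * (n.factorial : ℂ) * ((Dfun L B c y ^ (n + 1))⁻¹)) • M2 L (n + 1) c

lemma hasFDerivAt_Gfun (L : ℕ) (A B : ℂ) (c : Fin L → ℂ) (n : ℕ) (y : Fin L → ℂ)
    (hy : Dfun L B c y ≠ 0) :
    HasFDerivAt (Gfun L A B c n)
      ((((-1 : ℂ) ^ (n + 1) * ((n + 1).factorial : ℂ)) •
          (Nfun L A y •
              ((-(((n + 2) : ℂ) * Dfun L B c y ^ (n + 2 - 1)) / (Dfun L B c y ^ (n + 2)) ^ 2) •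
                Cclm L c)
            + (Dfun L B c y ^ (n + 2))⁻¹ • Sclm L)).smulRight (M1 L (n + 1) c)
        + (((-1 : ℂ) ^ n * (n.factorial : ℂ)) •
            ((-(((n + 1) : ℂ) * Dfun L B c y ^ (n + 1 - 1)) / (Dfun L B c y ^ (n + 1)) ^ 2) •
              Cclm L c)).smulRight (M2 L (n + 1) c)) y := by
  have h1 := (((hasFDerivAt_N L A y).mul (hasFDerivAt_invpow L B c (n + 2) y hy)).const_mul
      ((-1 : ℂ) ^ (n + 1) * ((n + 1).factorial : ℂ))).smul_const (M1 L (n + 1) c)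
  have h2 := (((hasFDerivAt_invpow L B c (n + 1) y hy)).const_mul
      ((-1 : ℂ) ^ n * (n.factorial : ℂ))).smul_const (M2 L (n + 1) c)
  have := h1.add h2
  push_cast at this ⊢
  exact this

lemma isOpen_Dne (L : ℕ) (B : ℂ) (c : Fin L → ℂ) : IsOpen (Dfun L B c ⁻¹' {0}ᶜ) := by
  have hcont : Continuous (Dfun L B c) := by
    unfold Dfun
    exact continuous_const.add (continuous_finset_sum _ fun l _ =>
      continuous_const.mul (continuous_apply l))
  exact isOpen_compl_singleton.preimage hcont

lemma iteratedFDeriv_ffun (L : ℕ) (A B : ℂ) (c : Fin L → ℂ) (n : ℕ) :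
    ∀ y, Dfun L B c y ≠ 0 →
      iteratedFDeriv ℂ (n + 1) (ffun L A B c) y = Gfun L A B c n y := by
  induction n with
  | zero =>
    intro y hy
    ext m
    rw [iteratedFDeriv_one_apply]
    have hf : HasFDerivAt (ffun L A B c)
        (Nfun L A y • ((-((1 : ℂ) * Dfun L B c y ^ (1 - 1)) / (Dfun L B c y ^ 1) ^ 2) • Cclm L c)
          + (Dfun L B c y ^ 1)⁻¹ • Sclm L) y := by
      have h : ffun L A B c = fun y => Nfun L A y * ((Dfun L B c y ^ 1)⁻¹) := by
        funext y; simp [ffun, div_eq_mul_inv]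
      rw [h]
      have h2 := (hasFDerivAt_N L A y).mul (hasFDerivAt_invpow L B c 1 y hy)
      simp only [Nat.cast_one] at h2
      exact h2
    rw [hf.fderiv]
    simp only [Gfun, M1_apply, M2_apply, ContinuousMultilinearMap.add_apply,
      ContinuousMultilinearMap.smul_apply, ContinuousLinearMap.add_apply,
      ContinuousLinearMap.smul_apply, smul_eq_mul, Fin.prod_univ_one, Fin.sum_univ_one]
    simp only [pow_one, pow_zero, Nat.factorial, ite_clm_apply, if_pos rfl]
    push_cast
    field_simp
    simp
  | succ n IH =>
    intro y hy
    ext m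
    rw [iteratedFDeriv_succ_apply_left]
    have hev : iteratedFDeriv ℂ (n + 1) (ffun L A B c) =ᶠ[nhds y] Gfun L A B c n :=
      Filter.eventuallyEq_of_mem ((isOpen_Dne L B c).mem_nhds hy) fun y' hy' => IH y' hy'
    rw [hev.fderiv_eq, (hasFDerivAt_Gfun L A B c n y hy).fderiv]
    simp only [Gfun, M1_succ, M2_succ, ContinuousMultilinearMap.add_apply,
      ContinuousMultilinearMap.smul_apply, ContinuousLinearMap.add_apply,
      ContinuousLinearMap.smulRight_apply, ContinuousLinearMap.smul_apply, smul_eq_mul]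
    have e1 : (((n + 1) + 1).factorial : ℂ) = ((n : ℂ) + 2) * ((n : ℂ) + 1) * (n.factorial : ℂ) := by
      push_cast [Nat.factorial_succ]; ring
    have e2 : ((n + 1).factorial : ℂ) = ((n : ℂ) + 1) * (n.factorial : ℂ) := by
      push_cast [Nat.factorial_succ]; ring
    rw [e1, e2]
    have e3 : n + 2 - 1 = n + 1 := by omega
    simp only [e3, Nat.add_sub_cancel]
    field_simp
    ring
end CSIAux

/-- Bound on the total `k`-th order Taylor contribution of the CSI ratio: if
`|c_l| = 1` for all `l`, then for `k ≥ 1`, `z` with `D(z) ≠ 0`, `R ≥ 0`, and any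
increment vector `w` with `|w_l| ≤ R` for all `l`, the sum over all `L^k` tuples
`(l₁,…,l_k)` of `|(1/k!) ∂^k f/∂z_{l₁}⋯∂z_{l_k}(z) ∏_i w_{l_i}|` is at most
`((|N(z)|+|D(z)|)/|D(z)|) (L·R/|D(z)|)^k`. -/
theorem csi_ratio_taylor_order_bound
    (L : ℕ) (hL : 1 ≤ L) (A B : ℂ) (c : Fin L → ℂ)
    (hc : ∀ l, ‖c l‖ = 1)
    (k : ℕ) (hk : 1 ≤ k)
    (z : Fin L → ℂ) (hD : Dfun L B c z ≠ 0)
    (R : ℝ) (hR : 0 ≤ R) (w : Fin L → ℂ) (hw : ∀ l, ‖w l‖ ≤ R) :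
    ∑ l : Fin k → Fin L,
        ‖(k.factorial : ℂ)⁻¹ *
            iteratedFDeriv ℂ k (ffun L A B c) z (fun i => Pi.single (l i) 1) *
            ∏ i, w (l i)‖ ≤
      ((‖Nfun L A z‖ + ‖Dfun L B c z‖) / ‖Dfun L B c z‖) *
        ((L * R) / ‖Dfun L B c z‖) ^ k := by
  obtain ⟨n, rfl⟩ : ∃ n, k = n + 1 := ⟨k - 1, (Nat.succ_pred_eq_of_pos hk).symm⟩
  have hform := CSIAux.iteratedFDeriv_ffun L A B c n z hD
  set NN := ‖Nfun L A z‖ with hNN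
  set DD := ‖Dfun L B c z‖ with hDDdef
  have hDD0 : (0 : ℝ) < DD := norm_pos_iff.mpr hD
  have key : ∀ l : Fin (n + 1) → Fin L,
      ‖((n + 1).factorial : ℂ)⁻¹ *
          iteratedFDeriv ℂ (n + 1) (ffun L A B c) z (fun i => Pi.single (l i) 1) *
          ∏ i, w (l i)‖ ≤ (NN + DD) / DD ^ (n + 2) * R ^ (n + 1) := by
    intro l
    rw [hform]
    have hval : CSIAux.Gfun L A B c n z (fun i => Pi.single (l i) 1)
        = (-1 : ℂ) ^ (n + 1) * ((n + 1).factorial : ℂ) *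
              (Nfun L A z * (Dfun L B c z ^ (n + 2))⁻¹) * ∏ i, c (l i)
          + (-1 : ℂ) ^ n * (n.factorial : ℂ) * (Dfun L B c z ^ (n + 1))⁻¹ *
              ∑ j, ∏ i, (if i = j then 1 else c (l i)) := by
      simp [CSIAux.Gfun, CSIAux.M1_apply, CSIAux.M2_apply, Pi.single_apply, mul_ite]
    rw [hval]
    have hX : ‖(-1 : ℂ) ^ (n + 1) * ((n + 1).factorial : ℂ) *
        (Nfun L A z * (Dfun L B c z ^ (n + 2))⁻¹) * ∏ i, c (l i)‖
        = ((n + 1).factorial : ℝ) * (NN * (DD ^ (n + 2))⁻¹) := by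
      have hprod : ∏ i : Fin (n + 1), ‖c (l i)‖ = 1 := Finset.prod_eq_one fun i _ => hc _
      simp only [norm_mul, norm_prod, norm_inv, norm_pow, norm_neg, norm_one, one_pow, one_mul]
      rw [hprod, mul_one, ← hNN, ← hDDdef]
      norm_num
    have hY : ‖(-1 : ℂ) ^ n * (n.factorial : ℂ) * (Dfun L B c z ^ (n + 1))⁻¹ *
        ∑ j : Fin (n + 1), ∏ i, (if i = j then 1 else c (l i))‖
        ≤ (n.factorial : ℝ) * (DD ^ (n + 1))⁻¹ * (n + 1) := by
      rw [norm_mul]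
      have hsum : ‖∑ j : Fin (n + 1), ∏ i, (if i = j then (1 : ℂ) else c (l i))‖
          ≤ ((n : ℝ) + 1) := by
        refine (norm_sum_le _ _).trans ?_
        have hone : ∀ j : Fin (n + 1), ‖∏ i, (if i = j then (1 : ℂ) else c (l i))‖ = 1 := by
          intro j
          rw [norm_prod]
          exact Finset.prod_eq_one fun i _ => by split <;> simp [hc]
        simp [hone]
      have hcoef : ‖(-1 : ℂ) ^ n * (n.factorial : ℂ) * (Dfun L B c z ^ (n + 1))⁻¹‖
          = (n.factorial : ℝ) * (DD ^ (n + 1))⁻¹ := by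
        simp only [norm_mul, norm_inv, norm_pow, norm_neg, norm_one, one_pow, one_mul]
        rw [← hDDdef]
        norm_num
      rw [hcoef]
      have h0 : (0 : ℝ) ≤ (n.factorial : ℝ) * (DD ^ (n + 1))⁻¹ := by positivity
      calc (n.factorial : ℝ) * (DD ^ (n + 1))⁻¹ *
            ‖∑ j : Fin (n + 1), ∏ i, (if i = j then (1 : ℂ) else c (l i))‖
          ≤ (n.factorial : ℝ) * (DD ^ (n + 1))⁻¹ * ((n : ℝ) + 1) := by
            exact mul_le_mul_of_nonneg_left hsum h0
        _ = (n.factorial : ℝ) * (DD ^ (n + 1))⁻¹ * (n + 1) := by push_cast; ring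
    have hW : ‖∏ i : Fin (n + 1), w (l i)‖ ≤ R ^ (n + 1) := by
      rw [norm_prod]
      calc ∏ i : Fin (n + 1), ‖w (l i)‖ ≤ ∏ _i : Fin (n + 1), R :=
            Finset.prod_le_prod (fun i _ => norm_nonneg _) (fun i _ => hw _)
        _ = R ^ (n + 1) := by simp
    rw [norm_mul, norm_mul, norm_inv]
    have hfc : ‖(((n + 1).factorial : ℕ) : ℂ)‖ = ((n + 1).factorial : ℝ) := by simp
    rw [hfc]
    have hXY : ‖(-1 : ℂ) ^ (n + 1) * ((n + 1).factorial : ℂ) *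
          (Nfun L A z * (Dfun L B c z ^ (n + 2))⁻¹) * ∏ i, c (l i)
        + (-1 : ℂ) ^ n * (n.factorial : ℂ) * (Dfun L B c z ^ (n + 1))⁻¹ *
          ∑ j : Fin (n + 1), ∏ i, (if i = j then 1 else c (l i))‖
        ≤ ((n + 1).factorial : ℝ) * (NN * (DD ^ (n + 2))⁻¹)
          + (n.factorial : ℝ) * (DD ^ (n + 1))⁻¹ * (n + 1) :=
      (norm_add_le _ _).trans (by rw [← hX] at *; exact add_le_add le_rfl hY)
    calc (((n + 1).factorial : ℝ))⁻¹ * ‖_ + _‖ * ‖∏ i : Fin (n + 1), w (l i)‖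
        ≤ (((n + 1).factorial : ℝ))⁻¹ *
            (((n + 1).factorial : ℝ) * (NN * (DD ^ (n + 2))⁻¹)
              + (n.factorial : ℝ) * (DD ^ (n + 1))⁻¹ * (n + 1)) * R ^ (n + 1) := by
          have h1 : (0:ℝ) ≤ (((n + 1).factorial : ℝ))⁻¹ := by positivity
          gcongr
      _ = (NN + DD) / DD ^ (n + 2) * R ^ (n + 1) := by
          have hf : ((n + 1).factorial : ℝ) = ((n : ℝ) + 1) * (n.factorial : ℝ) := by
            push_cast [Nat.factorial_succ]; ring
          rw [hf]
          have hfn : (n.factorial : ℝ) ≠ 0 := by positivity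
          field_simp
          ring
  calc ∑ l : Fin (n + 1) → Fin L,
        ‖((n + 1).factorial : ℂ)⁻¹ *
            iteratedFDeriv ℂ (n + 1) (ffun L A B c) z (fun i => Pi.single (l i) 1) *
            ∏ i, w (l i)‖
      ≤ ∑ _l : Fin (n + 1) → Fin L, (NN + DD) / DD ^ (n + 2) * R ^ (n + 1) :=
        Finset.sum_le_sum fun l _ => key l
    _ = (L : ℝ) ^ (n + 1) * ((NN + DD) / DD ^ (n + 2) * R ^ (n + 1)) := by
        rw [Finset.sum_const, Finset.card_univ]
        simp [Fintype.card_fun, nsmul_eq_mul]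
    _ = (NN + DD) / DD * ((L * R) / DD) ^ (n + 1) := by
        rw [div_pow, mul_pow]
        field_simp
        ring
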